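/- There is a constant K (one can take K = 12) such that every h in the first-level stabilizer H of the Grigorchuk group satisfies |h| ≤ 4·max{|h₀|, |h₁|} + K, where ψ(h) = (h₀, h₁) and |·| denotes word length with respect to {a, b, c, d}. -/

import Mathlib

/-- The generator `a` of the Grigorchuk group, acting on finite binary sequences. -/
def grigA : List Bool → List Bool
  | [] => []
  | x :: σ => (!x) :: σ

mutual
  /-- The generator `b` of the Grigorchuk group. -/
  def grigB : List Bool → List Bool
    | [] => []
    | false :: σ => false :: grigA σ
    | true :: σ => true :: grigC σ
  /-- The generator `c` of the Grigorchuk group. -/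
  def grigC : List Bool → List Bool
    | [] => []
    | false :: σ => false :: grigA σ
    | true :: σ => true :: grigD σ
  /-- The generator `d` of the Grigorchuk group. -/
  def grigD : List Bool → List Bool
    | [] => []
    | false :: σ => false :: σ
    | true :: σ => true :: grigB σ
end

theorem grigA_involutive : Function.Involutive grigA := by
  intro l
  rcases l with _ | ⟨x, σ⟩
  · rfl
  · cases x <;> rfl

theorem grigBCD_involutive :
    ∀ l : List Bool, grigB (grigB l) = l ∧ grigC (grigC l) = l ∧ grigD (grigD l) = l := by
  intro l
  induction l with
  | nil => exact ⟨rfl, rfl, rfl⟩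
  | cons x σ ih =>
      cases x <;>
        simp [grigB, grigC, grigD, grigA_involutive σ, ih.1, ih.2.1, ih.2.2]

theorem grigB_involutive : Function.Involutive grigB := fun l => (grigBCD_involutive l).1
theorem grigC_involutive : Function.Involutive grigC := fun l => (grigBCD_involutive l).2.1
theorem grigD_involutive : Function.Involutive grigD := fun l => (grigBCD_involutive l).2.2

/-- The generator `a` as a permutation of binary sequences. -/
def aP : Equiv.Perm (List Bool) := grigA_involutive.toPerm
/-- The generator `b` as a permutation of binary sequences. -/
def bP : Equiv.Perm (List Bool) := grigB_involutive.toPerm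
/-- The generator `c` as a permutation of binary sequences. -/
def cP : Equiv.Perm (List Bool) := grigC_involutive.toPerm
/-- The generator `d` as a permutation of binary sequences. -/
def dP : Equiv.Perm (List Bool) := grigD_involutive.toPerm

/-- The Grigorchuk group, as the group of permutations of finite binary sequences
generated by `a`, `b`, `c`, `d`. -/
def Grig : Subgroup (Equiv.Perm (List Bool)) := Subgroup.closure {aP, bP, cP, dP}

/-- `a` as an element of the Grigorchuk group. -/
def ga : Grig := ⟨aP, Subgroup.subset_closure (by simp)⟩
/-- `b` as an element of the Grigorchuk group. -/
def gb : Grig := ⟨bP, Subgroup.subset_closure (by simp)⟩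
/-- `c` as an element of the Grigorchuk group. -/
def gc : Grig := ⟨cP, Subgroup.subset_closure (by simp)⟩
/-- `d` as an element of the Grigorchuk group. -/
def gd : Grig := ⟨dP, Subgroup.subset_closure (by simp)⟩

/-- A permutation of binary sequences preserves the first letter. -/
def FixesFirst (g : Equiv.Perm (List Bool)) : Prop :=
  ∀ (x : Bool) (σ : List Bool), ∃ σ' : List Bool, g (x :: σ) = x :: σ'
/-- The weight (norm) on a group `G` induced by a weight function `ω` on a generating set
`S`: the infimum of the total weights of words over `S` representing `g`. -/
noncomputable def wordWeight {G : Type*} [Group G] (S : Set G) (ω : G → ℝ) (g : G) : ℝ :=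
  sInf ((fun l : List G => (l.map ω).sum) '' {l : List G | (∀ s ∈ l, s ∈ S) ∧ l.prod = g})

/-- The growth function of `G` with respect to the generating set `S` and weight `ω`:
the number of elements of weight at most `x`. -/
noncomputable def growth {G : Type*} [Group G] (S : Set G) (ω : G → ℝ) (x : ℝ) : ℕ :=
  Nat.card {g : G | wordWeight S ω g ≤ x}

/-- The word length of `g` with respect to the generating set `S`. -/
noncomputable def wordLength {G : Type*} [Group G] (S : Set G) (g : G) : ℕ :=
  sInf {n : ℕ | ∃ l : List G, (∀ s ∈ l, s ∈ S) ∧ l.prod = g ∧ l.length = n}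

/-- The defining property of the subtree-decomposition map `ψ : H → G × G`:
`h(0σ) = 0·h₀(σ)` and `h(1σ) = 1·h₁(σ)` where `ψ(h) = (h₀, h₁)`. -/
def PsiProp (H : Subgroup Grig) (ψ : H →* Grig × Grig) : Prop :=
  ∀ (h : H) (σ : List Bool),
    ((h : Grig) : Equiv.Perm (List Bool)) (false :: σ) =
        false :: (((ψ h).1 : Grig) : Equiv.Perm (List Bool)) σ ∧
    ((h : Grig) : Equiv.Perm (List Bool)) (true :: σ) =
        true :: (((ψ h).2 : Grig) : Equiv.Perm (List Bool)) σ

/-! ### Auxiliary development for the length contraction theorem -/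

section GrigAux

/-- Letters of the alphabet `{a, b, c, d}`. -/
inductive Ltr : Type | A | B | C | D
deriving DecidableEq

instance : Fintype Ltr :=
  ⟨⟨↑[Ltr.A, Ltr.B, Ltr.C, Ltr.D], by decide⟩, fun x => by cases x <;> decide⟩

/-- Action of a letter on binary sequences. -/
def actL : Ltr → List Bool → List Bool
  | .A => grigA
  | .B => grigB
  | .C => grigC
  | .D => grigD

/-- Action of a word (applied left-to-right as function composition). -/
def applyW : List Ltr → List Bool → List Bool
  | [], l => l
  | ℓ :: w, l => actL ℓ (applyW w l)

/-- A letter as an element of the Grigorchuk group. -/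
def genG : Ltr → Grig
  | .A => ga
  | .B => gb
  | .C => gc
  | .D => gd

/-- A word as an element of the Grigorchuk group. -/
def evalG (w : List Ltr) : Grig := (w.map genG).prod

@[simp] lemma evalG_nil : evalG [] = 1 := rfl

@[simp] lemma evalG_cons (ℓ : Ltr) (w : List Ltr) : evalG (ℓ :: w) = genG ℓ * evalG w := by
  simp [evalG]

lemma evalG_append (w₁ w₂ : List Ltr) : evalG (w₁ ++ w₂) = evalG w₁ * evalG w₂ := by
  simp [evalG]

@[simp] lemma genG_val_apply (ℓ : Ltr) (l : List Bool) :
    ((genG ℓ : Grig) : Equiv.Perm (List Bool)) l = actL ℓ l := by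
  cases ℓ <;> rfl

lemma val_evalG (w : List Ltr) (l : List Bool) :
    ((evalG w : Grig) : Equiv.Perm (List Bool)) l = applyW w l := by
  induction w generalizing l with
  | nil => rfl
  | cons ℓ w ih =>
      simp only [evalG_cons, applyW, Subgroup.coe_mul, Equiv.Perm.mul_apply, ih, genG_val_apply]

/-- Lengths are preserved by the generators. -/
lemma len_grigA (l : List Bool) : (grigA l).length = l.length := by
  rcases l with _ | ⟨x, σ⟩ <;> rfl

lemma len_grigBCD (l : List Bool) :
    (grigB l).length = l.length ∧ (grigC l).length = l.length ∧
      (grigD l).length = l.length := by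
  induction l with
  | nil => exact ⟨rfl, rfl, rfl⟩
  | cons x σ ih =>
      cases x <;> simp [grigB, grigC, grigD, len_grigA, ih.1, ih.2.1, ih.2.2]

lemma len_actL (ℓ : Ltr) (l : List Bool) : (actL ℓ l).length = l.length := by
  cases ℓ
  · exact len_grigA l
  · exact (len_grigBCD l).1
  · exact (len_grigBCD l).2.1
  · exact (len_grigBCD l).2.2

lemma len_applyW (w : List Ltr) (l : List Bool) : (applyW w l).length = l.length := by
  induction w with
  | nil => rfl
  | cons ℓ w ih => simp [applyW, len_actL, ih]

/-- Every element of the Grigorchuk group preserves lengths. -/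
lemma len_mem {x : Equiv.Perm (List Bool)} (hx : x ∈ Grig) :
    ∀ l : List Bool, (x l).length = l.length := by
  induction hx using Subgroup.closure_induction with
  | mem y hy =>
      intro l
      rcases hy with h | h | h | h <;> subst h
      · exact len_grigA l
      · exact (len_grigBCD l).1
      · exact (len_grigBCD l).2.1
      · exact (len_grigBCD l).2.2
  | one => intro l; rfl
  | mul y z _ _ ihy ihz =>
      intro l
      simpa [ihz l] using ihy (z l)
  | inv y _ ih =>
      intro l
      have := ih (y⁻¹ l)
      simpa using this.symm

lemma len_grig (g : Grig) (l : List Bool) :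
    ((g : Equiv.Perm (List Bool)) l).length = l.length := len_mem g.2 l

end GrigAux
section GrigRel

/-- Products of the generators b, c, d. -/
lemma mulBCD : ∀ l : List Bool,
    grigB (grigC l) = grigD l ∧ grigC (grigD l) = grigB l ∧ grigD (grigB l) = grigC l ∧
    grigC (grigB l) = grigD l ∧ grigD (grigC l) = grigB l ∧ grigB (grigD l) = grigC l := by
  intro l
  induction l with
  | nil => exact ⟨rfl, rfl, rfl, rfl, rfl, rfl⟩
  | cons x σ ih =>
      cases x <;>
        simp [grigB, grigC, grigD, grigA_involutive σ, ih.1, ih.2.1, ih.2.2.1,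
          ih.2.2.2.1, ih.2.2.2.2.1, ih.2.2.2.2.2]

lemma dada_eq_adad (l : List Bool) :
    grigD (grigA (grigD (grigA l))) = grigA (grigD (grigA (grigD l))) := by
  rcases l with _ | ⟨x, σ⟩
  · rfl
  · cases x <;> simp [grigA, grigB, grigD]

lemma ad_pow4 (l : List Bool) :
    grigA (grigD (grigA (grigD (grigA (grigD (grigA (grigD l))))))) = l := by
  rcases l with _ | ⟨x, σ⟩
  · rfl
  · cases x <;> simp [grigA, grigB, grigD, grigB_involutive σ]

/-! ### Level-3 restriction -/

abbrev V3 := Bool × Bool × Bool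

def pack3 : V3 → List Bool
  | (x, y, z) => [x, y, z]

def unpack3 (l : List Bool) : V3 := (l.headI, l.tail.headI, l.tail.tail.headI)

lemma unpack3_pack3 (t : V3) : unpack3 (pack3 t) = t := by
  obtain ⟨x, y, z⟩ := t; rfl

lemma len_pack3 (t : V3) : (pack3 t).length = 3 := by
  obtain ⟨x, y, z⟩ := t; rfl

lemma pack3_unpack3 {l : List Bool} (h : l.length = 3) : pack3 (unpack3 l) = l := by
  rcases l with _ | ⟨x, _ | ⟨y, _ | ⟨z, _ | ⟨w, t⟩⟩⟩⟩ <;> simp_all [pack3, unpack3]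

/-- Restriction of a (length-preserving) map to level 3. -/
def res3 (f : List Bool → List Bool) : V3 → V3 := fun t => unpack3 (f (pack3 t))

lemma res3_comp (g f : List Bool → List Bool) (hf : ∀ l, (f l).length = l.length) :
    res3 (fun l => g (f l)) = res3 g ∘ res3 f := by
  funext t
  simp only [res3, Function.comp_apply]
  rw [pack3_unpack3 (by rw [hf, len_pack3])]

lemma applyW_append (w₁ w₂ : List Ltr) (l : List Bool) :
    applyW (w₁ ++ w₂) l = applyW w₁ (applyW w₂ l) := by
  induction w₁ with
  | nil => rfl
  | cons ℓ w ih => simp [applyW, ih]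

/-- Level-3 action of a word. -/
def FW (w : List Ltr) : V3 → V3 := res3 (applyW w)

lemma FW_append (w₁ w₂ : List Ltr) : FW (w₁ ++ w₂) = FW w₁ ∘ FW w₂ := by
  have : applyW (w₁ ++ w₂) = fun l => applyW w₁ (applyW w₂ l) := by
    funext l; exact applyW_append w₁ w₂ l
  rw [FW, this, res3_comp _ _ (len_applyW w₂)]; rfl

lemma res3_evalG (w : List Ltr) :
    res3 ⇑((evalG w : Grig) : Equiv.Perm (List Bool)) = FW w := by
  funext t; simp [res3, FW, val_evalG]

lemma res3_mulG (g h : Grig) :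
    res3 ⇑((g * h : Grig) : Equiv.Perm (List Bool)) =
      res3 ⇑(g : Equiv.Perm (List Bool)) ∘ res3 ⇑(h : Equiv.Perm (List Bool)) := by
  have : ⇑((g * h : Grig) : Equiv.Perm (List Bool)) =
      fun l => (g : Equiv.Perm (List Bool)) ((h : Equiv.Perm (List Bool)) l) := by
    funext l; rfl
  rw [this, res3_comp _ _ (len_grig h)]

lemma res3_one : res3 ⇑((1 : Grig) : Equiv.Perm (List Bool)) = id := by
  funext t
  show unpack3 (pack3 t) = t
  exact unpack3_pack3 t

lemma res3_inv_left (g : Grig) :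
    res3 ⇑((g⁻¹ : Grig) : Equiv.Perm (List Bool)) ∘ res3 ⇑(g : Equiv.Perm (List Bool)) = id := by
  rw [← res3_mulG, inv_mul_cancel]; exact res3_one

lemma res3_inv_right (g : Grig) :
    res3 ⇑(g : Equiv.Perm (List Bool)) ∘ res3 ⇑((g⁻¹ : Grig) : Equiv.Perm (List Bool)) = id := by
  rw [← res3_mulG, mul_inv_cancel]; exact res3_one

def m0 : V3 → V3
  | (false, false, false) => (false, false, false)
  | (false, false, true) => (false, false, true)
  | (false, true, false) => (false, true, false)
  | (false, true, true) => (false, true, true)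
  | (true, false, false) => (true, false, false)
  | (true, false, true) => (true, false, true)
  | (true, true, false) => (true, true, false)
  | (true, true, true) => (true, true, true)

def m1 : V3 → V3
  | (false, false, false) => (false, true, false)
  | (false, false, true) => (false, true, true)
  | (false, true, false) => (false, false, false)
  | (false, true, true) => (false, false, true)
  | (true, false, false) => (true, false, true)
  | (true, false, true) => (true, false, false)
  | (true, true, false) => (true, true, false)
  | (true, true, true) => (true, true, true)

def m2 : V3 → V3
  | (false, false, false) => (false, false, true)
  | (false, false, true) => (false, false, false)
  | (false, true, false) => (false, true, false)
  | (false, true, true) => (false, true, true)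
  | (true, false, false) => (true, true, false)
  | (true, false, true) => (true, true, true)
  | (true, true, false) => (true, false, false)
  | (true, true, true) => (true, false, true)

def m3 : V3 → V3
  | (false, false, false) => (false, true, false)
  | (false, false, true) => (false, true, true)
  | (false, true, false) => (false, false, true)
  | (false, true, true) => (false, false, false)
  | (true, false, false) => (true, true, true)
  | (true, false, true) => (true, true, false)
  | (true, true, false) => (true, false, false)
  | (true, true, true) => (true, false, true)

def m4 : V3 → V3
  | (false, false, false) => (false, true, true)
  | (false, false, true) => (false, true, false)
  | (false, true, false) => (false, false, false)
  | (false, true, true) => (false, false, true)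
  | (true, false, false) => (true, true, false)
  | (true, false, true) => (true, true, true)
  | (true, true, false) => (true, false, true)
  | (true, true, true) => (true, false, false)

def m5 : V3 → V3
  | (false, false, false) => (false, false, false)
  | (false, false, true) => (false, false, true)
  | (false, true, false) => (false, true, true)
  | (false, true, true) => (false, true, false)
  | (true, false, false) => (true, true, false)
  | (true, false, true) => (true, true, true)
  | (true, true, false) => (true, false, false)
  | (true, true, true) => (true, false, true)

def m6 : V3 → V3
  | (false, false, false) => (false, false, true)
  | (false, false, true) => (false, false, false)
  | (false, true, false) => (false, true, false)
  | (false, true, true) => (false, true, true)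
  | (true, false, false) => (true, true, true)
  | (true, false, true) => (true, true, false)
  | (true, true, false) => (true, false, true)
  | (true, true, true) => (true, false, false)

def m7 : V3 → V3
  | (false, false, false) => (false, true, false)
  | (false, false, true) => (false, true, true)
  | (false, true, false) => (false, false, true)
  | (false, true, true) => (false, false, false)
  | (true, false, false) => (true, true, false)
  | (true, false, true) => (true, true, true)
  | (true, true, false) => (true, false, true)
  | (true, true, true) => (true, false, false)

def m8 : V3 → V3
  | (false, false, false) => (false, true, true)
  | (false, false, true) => (false, true, false)
  | (false, true, false) => (false, false, false)
  | (false, true, true) => (false, false, true)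
  | (true, false, false) => (true, true, true)
  | (true, false, true) => (true, true, false)
  | (true, true, false) => (true, false, false)
  | (true, true, true) => (true, false, true)

def m9 : V3 → V3
  | (false, false, false) => (false, false, false)
  | (false, false, true) => (false, false, true)
  | (false, true, false) => (false, true, true)
  | (false, true, true) => (false, true, false)
  | (true, false, false) => (true, true, true)
  | (true, false, true) => (true, true, false)
  | (true, true, false) => (true, false, true)
  | (true, true, true) => (true, false, false)

def m10 : V3 → V3
  | (false, false, false) => (false, true, true)
  | (false, false, true) => (false, true, false)
  | (false, true, false) => (false, false, true)
  | (false, true, true) => (false, false, false)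
  | (true, false, false) => (true, false, true)
  | (true, false, true) => (true, false, false)
  | (true, true, false) => (true, true, false)
  | (true, true, true) => (true, true, true)

def m11 : V3 → V3
  | (false, false, false) => (false, true, false)
  | (false, false, true) => (false, true, true)
  | (false, true, false) => (false, false, false)
  | (false, true, true) => (false, false, true)
  | (true, false, false) => (true, false, false)
  | (true, false, true) => (true, false, true)
  | (true, true, false) => (true, true, true)
  | (true, true, true) => (true, true, false)

def m12 : V3 → V3
  | (false, false, false) => (false, true, true)
  | (false, false, true) => (false, true, false)
  | (false, true, false) => (false, false, true)
  | (false, true, true) => (false, false, false)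
  | (true, false, false) => (true, false, false)
  | (true, false, true) => (true, false, true)
  | (true, true, false) => (true, true, true)
  | (true, true, true) => (true, true, false)

def m13 : V3 → V3
  | (false, false, false) => (false, false, true)
  | (false, false, true) => (false, false, false)
  | (false, true, false) => (false, true, true)
  | (false, true, true) => (false, true, false)
  | (true, false, false) => (true, false, true)
  | (true, false, true) => (true, false, false)
  | (true, true, false) => (true, true, true)
  | (true, true, true) => (true, true, false)

def m14 : V3 → V3
  | (false, false, false) => (false, false, false)
  | (false, false, true) => (false, false, true)
  | (false, true, false) => (false, true, false)
  | (false, true, true) => (false, true, true)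
  | (true, false, false) => (true, false, true)
  | (true, false, true) => (true, false, false)
  | (true, true, false) => (true, true, true)
  | (true, true, true) => (true, true, false)

def m15 : V3 → V3
  | (false, false, false) => (false, false, true)
  | (false, false, true) => (false, false, false)
  | (false, true, false) => (false, true, true)
  | (false, true, true) => (false, true, false)
  | (true, false, false) => (true, false, false)
  | (true, false, true) => (true, false, true)
  | (true, true, false) => (true, true, false)
  | (true, true, true) => (true, true, true)

def Mfuns : List (V3 → V3) := [m0, m1, m2, m3, m4, m5, m6, m7, m8, m9, m10, m11, m12, m13, m14, m15]


/-! ### Fast decidable equality on level-3 maps -/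

def V3list : List V3 :=
  [(false,false,false),(false,false,true),(false,true,false),(false,true,true),
   (true,false,false),(true,false,true),(true,true,false),(true,true,true)]

def feq (f g : V3 → V3) : Bool := V3list.all (fun t => f t = g t)

lemma feq_eq {f g : V3 → V3} (h : feq f g = true) : f = g := by
  simp only [feq, V3list, List.all_cons, List.all_nil, Bool.and_true, Bool.and_eq_true,
    decide_eq_true_eq] at h
  funext t
  obtain ⟨x, y, z⟩ := t
  cases x <;> cases y <;> cases z <;>
    simp [h.1, h.2.1, h.2.2.1, h.2.2.2.1, h.2.2.2.2.1, h.2.2.2.2.2.1,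
      h.2.2.2.2.2.2.1, h.2.2.2.2.2.2.2]

def fmem (f : V3 → V3) (L : List (V3 → V3)) : Bool := L.any (feq f)

lemma fmem_mem {f : V3 → V3} {L : List (V3 → V3)} (h : fmem f L = true) : f ∈ L := by
  rcases List.any_eq_true.1 h with ⟨g, hg, hfg⟩
  exact (feq_eq hfg) ▸ hg

lemma all_mem {α : Type*} {L : List α} {p : α → Bool} (h : L.all p = true) :
    ∀ x ∈ L, p x = true := List.all_eq_true.1 h

lemma any_mem {α : Type*} {L : List α} {p : α → Bool} (h : L.any p = true) :
    ∃ x ∈ L, p x = true := List.any_eq_true.1 h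

lemma M_one : (id : V3 → V3) ∈ Mfuns := by
  have : fmem (id : V3 → V3) Mfuns = true := by decide
  exact fmem_mem this

lemma M_mul : ∀ m ∈ Mfuns, ∀ n ∈ Mfuns, m ∘ n ∈ Mfuns := by
  have h : Mfuns.all (fun m => Mfuns.all (fun n => fmem (m ∘ n) Mfuns)) = true := by decide
  intro m hm n hn
  exact fmem_mem (all_mem (all_mem h m hm) n hn)

lemma M_inv : ∀ m ∈ Mfuns, ∃ n ∈ Mfuns, m ∘ n = id ∧ n ∘ m = id := by
  have h : Mfuns.all
      (fun m => Mfuns.any (fun n => feq (m ∘ n) id && feq (n ∘ m) id)) = true := by decide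
  intro m hm
  obtain ⟨n, hn, hb⟩ := any_mem (all_mem h m hm)
  rw [Bool.and_eq_true] at hb
  exact ⟨n, hn, feq_eq hb.1, feq_eq hb.2⟩

lemma M_conj_gen : ∀ (ℓ : Ltr), ∀ m ∈ Mfuns,
    (∃ n ∈ Mfuns, FW [ℓ] ∘ m = n ∘ FW [ℓ]) ∧
    (∃ n ∈ Mfuns, FW [ℓ] ∘ n = m ∘ FW [ℓ]) := by
  have h : ∀ ℓ : Ltr, Mfuns.all (fun m =>
      (Mfuns.any fun n => feq (FW [ℓ] ∘ m) (n ∘ FW [ℓ])) &&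
      (Mfuns.any fun n => feq (FW [ℓ] ∘ n) (m ∘ FW [ℓ]))) = true := by decide
  intro ℓ m hm
  have hb := all_mem (h ℓ) m hm
  rw [Bool.and_eq_true] at hb
  obtain ⟨n₁, hn₁, e₁⟩ := any_mem hb.1
  obtain ⟨n₂, hn₂, e₂⟩ := any_mem hb.2
  exact ⟨⟨n₁, hn₁, feq_eq e₁⟩, ⟨n₂, hn₂, feq_eq e₂⟩⟩

end GrigRel
section RelTT

lemma feq_refl (f : V3 → V3) : feq f f = true := by
  simp [feq]

lemma res3_gen (ℓ : Ltr) :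
    res3 ⇑((genG ℓ : Grig) : Equiv.Perm (List Bool)) = FW [ℓ] := by
  cases ℓ <;> rfl

/-- The level-3 coset relation (same coset of the normal closure of `b`). -/
def relB (x y : Grig) : Prop :=
  ∃ m ∈ Mfuns, res3 ⇑(x : Equiv.Perm (List Bool)) = res3 ⇑(y : Equiv.Perm (List Bool)) ∘ m

lemma relB_refl (x : Grig) : relB x x :=
  ⟨id, M_one, rfl⟩

lemma relB_symm {x y : Grig} (h : relB x y) : relB y x := by
  obtain ⟨m, hm, he⟩ := h
  obtain ⟨n, hn, hmn, hnm⟩ := M_inv m hm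
  refine ⟨n, hn, ?_⟩
  funext t
  have := congrFun he (n t)
  simp only [Function.comp_apply] at this ⊢
  rw [this]
  have : m (n t) = t := congrFun hmn t
  rw [this]

lemma relB_trans {x y z : Grig} (h₁ : relB x y) (h₂ : relB y z) : relB x z := by
  obtain ⟨m, hm, he⟩ := h₁
  obtain ⟨n, hn, hf⟩ := h₂
  refine ⟨n ∘ m, M_mul n hn m hm, ?_⟩
  funext t
  have e1 := congrFun he t
  have e2 := congrFun hf (m t)
  simp only [Function.comp_apply] at e1 e2 ⊢
  rw [e1, e2]

/-- Conjugation stability of `Mfuns` under the whole group. -/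
lemma conjM (g : Grig) : ∀ m ∈ Mfuns,
    (∃ n ∈ Mfuns, res3 ⇑(g : Equiv.Perm (List Bool)) ∘ m = n ∘ res3 ⇑(g : Equiv.Perm (List Bool))) ∧
    (∃ n ∈ Mfuns, res3 ⇑(g : Equiv.Perm (List Bool)) ∘ n = m ∘ res3 ⇑(g : Equiv.Perm (List Bool))) := by
  obtain ⟨x, hx⟩ := g
  show ∀ m ∈ Mfuns, (∃ n ∈ Mfuns, res3 ⇑x ∘ m = n ∘ res3 ⇑x) ∧
      (∃ n ∈ Mfuns, res3 ⇑x ∘ n = m ∘ res3 ⇑x)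
  induction hx using Subgroup.closure_induction with
  | mem y hy =>
      rcases hy with h | h | h | h <;> subst h
      · exact M_conj_gen .A
      · exact M_conj_gen .B
      · exact M_conj_gen .C
      · exact M_conj_gen .D
  | one =>
      intro m hm
      constructor <;> exact ⟨m, hm, rfl⟩
  | mul y z hy hz ihy ihz =>
      intro m hm
      have hres : res3 ⇑(y * z) = res3 ⇑y ∘ res3 ⇑z := by
        have : ⇑(y * z) = fun l => y (z l) := by funext l; rfl
        rw [this, res3_comp _ _ (len_mem hz)]
      constructor
      · obtain ⟨n, hn, e₁⟩ := (ihz m hm).1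
        obtain ⟨k, hk, e₂⟩ := (ihy n hn).1
        refine ⟨k, hk, ?_⟩
        funext t
        have h1 := congrFun e₁ t
        have h2 := congrFun e₂ (res3 (⇑z) t)
        have h3 := congrFun hres (m t)
        have h4 := congrFun hres t
        simp only [Function.comp_apply] at h1 h2 h3 h4 ⊢
        rw [h3, h1, h2, h4]
      · obtain ⟨n, hn, e₁⟩ := (ihy m hm).2
        obtain ⟨k, hk, e₂⟩ := (ihz n hn).2
        refine ⟨k, hk, ?_⟩
        funext t
        have h1 := congrFun e₁ (res3 (⇑z) t)
        have h2 := congrFun e₂ t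
        have h3 := congrFun hres (k t)
        have h4 := congrFun hres t
        simp only [Function.comp_apply] at h1 h2 h3 h4 ⊢
        rw [h3, h2, h1, h4]
  | inv y hy ih =>
      intro m hm
      have hl : res3 ⇑y⁻¹ ∘ res3 ⇑y = id := res3_inv_left (⟨y, hy⟩ : Grig)
      have hr : res3 ⇑y ∘ res3 ⇑y⁻¹ = id := res3_inv_right (⟨y, hy⟩ : Grig)
      constructor
      · obtain ⟨n, hn, e⟩ := (ih m hm).2
        refine ⟨n, hn, ?_⟩
        funext t
        have h1 := congrFun e (res3 (⇑y⁻¹) t)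
        have h2 := congrFun hr t
        have h3 := congrFun hl (n (res3 (⇑y⁻¹) t))
        simp only [Function.comp_apply, id_eq] at h1 h2 h3 ⊢
        rw [← h3, h1, h2]
      · obtain ⟨n, hn, e⟩ := (ih m hm).1
        refine ⟨n, hn, ?_⟩
        funext t
        have h1 := congrFun e (res3 (⇑y⁻¹) t)
        have h2 := congrFun hr t
        have h3 := congrFun hl (m (res3 (⇑y⁻¹) t))
        simp only [Function.comp_apply, id_eq] at h1 h2 h3 ⊢
        rw [← h3, h1, h2]

/-- Multiplicativity of `relB` against explicit words. -/
lemma relB_mul {x y : Grig} {w₁ w₂ w₃ : List Ltr} (h₁ : relB x (evalG w₁))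
    (h₂ : relB y (evalG w₂)) (hw : FW (w₁ ++ w₂) = FW w₃) :
    relB (x * y) (evalG w₃) := by
  obtain ⟨m, hm, he⟩ := h₁
  obtain ⟨m', hm', hf⟩ := h₂
  obtain ⟨n, hn, hcom⟩ := (conjM (evalG w₂) m hm).2
  rw [res3_evalG] at hcom
  refine ⟨n ∘ m', M_mul n hn m' hm', ?_⟩
  funext t
  have h3 := congrFun (res3_mulG x y) t
  have h4 := congrFun he (res3 (⇑((y : Grig) : Equiv.Perm (List Bool))) t)
  have h5 := congrFun hf t
  have h6 := congrFun hcom (m' t)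
  have h7 := congrFun (FW_append w₁ w₂) (n (m' t))
  have h8 := congrFun hw (n (m' t))
  simp only [Function.comp_apply, res3_evalG] at h3 h4 h5 h6 h7 h8 ⊢
  rw [h3, h4, h5, ← h6, ← h7, h8]

/-- `relB` and inverses, against explicit words. -/
lemma relB_inv {x : Grig} {w w' : List Ltr} (h : relB x (evalG w))
    (h1 : FW (w ++ w') = FW []) (h2 : FW (w' ++ w) = FW []) :
    relB x⁻¹ (evalG w') := by
  obtain ⟨m, hm, he⟩ := h
  obtain ⟨m', hm', hmm', hm'm⟩ := M_inv m hm
  -- claim : res3 x⁻¹ = m' ∘ FW w'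
  have hFid : ∀ t, FW [] t = t := fun t => unpack3_pack3 t
  have key : res3 ⇑((x⁻¹ : Grig) : Equiv.Perm (List Bool)) = fun t => m' (FW w' t) := by
    have hinvl := res3_inv_left x
    have hinvr := res3_inv_right x
    funext t
    -- x⁻¹ = x⁻¹ ∘ (x ∘ candidate-inverse-of-x)
    -- first show x ∘ (m' ∘ FW w') = id
    have hxc : ∀ s, res3 ⇑((x : Grig) : Equiv.Perm (List Bool)) (m' (FW w' s)) = s := by
      intro s
      have e1 := congrFun he (m' (FW w' s))
      simp only [Function.comp_apply, res3_evalG] at e1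
      rw [e1]
      have e2 := congrFun hmm' (FW w' s)
      simp only [Function.comp_apply] at e2
      rw [e2]
      simp only [id_eq]
      have e3 := congrFun (FW_append w w') s
      simp only [Function.comp_apply] at e3
      rw [← e3]
      have e4 := congrFun h1 s
      rw [e4, hFid s]
    have e5 := congrFun hinvl (m' (FW w' t))
    simp only [Function.comp_apply, id_eq] at e5
    calc res3 ⇑((x⁻¹ : Grig) : Equiv.Perm (List Bool)) t
        = res3 ⇑((x⁻¹ : Grig) : Equiv.Perm (List Bool))
            (res3 ⇑((x : Grig) : Equiv.Perm (List Bool)) (m' (FW w' t))) := by rw [hxc t]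
      _ = m' (FW w' t) := e5
  obtain ⟨n, hn, hcom⟩ := (conjM (evalG w') m' hm').2
  rw [res3_evalG] at hcom
  refine ⟨n, hn, ?_⟩
  funext t
  have h6 := congrFun hcom t
  simp only [Function.comp_apply, res3_evalG] at h6 ⊢
  rw [key]
  exact h6.symm

/-! ### The eight pairs: τ and υ words, index tables -/

def tauW : Fin 8 → List Ltr :=
  ![[], [.A], [.D], [.A,.D], [.D,.A], [.A,.D,.A], [.D,.A,.D], [.A,.D,.A,.D]]

def upsW : Fin 8 → List Ltr :=
  ![[], [.D], [.A], [.D,.A], [.A,.D], [.D,.A,.D], [.A,.D,.A], [.A,.D,.A,.D]]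

def mulIdx : Fin 8 → Fin 8 → Fin 8 :=
  ![![0,1,2,3,4,5,6,7], ![1,0,3,2,5,4,7,6], ![2,4,0,6,1,7,3,5], ![3,5,1,7,0,6,2,4],
    ![4,2,6,0,7,1,5,3], ![5,3,7,1,6,0,4,2], ![6,7,4,5,2,3,0,1], ![7,6,5,4,3,2,1,0]]

def invIdx : Fin 8 → Fin 8 := ![0,1,2,4,3,5,6,7]

def swapIdx : Fin 8 → Fin 8 := ![0,2,1,4,3,6,5,7]

lemma tau_mul_f : ∀ i j : Fin 8,
    feq (FW (tauW i ++ tauW j)) (FW (tauW (mulIdx i j))) = true ∧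
    feq (FW (upsW i ++ upsW j)) (FW (upsW (mulIdx i j))) = true := by decide

lemma tau_inv_f : ∀ i : Fin 8,
    feq (FW (tauW i ++ tauW (invIdx i))) (FW []) = true ∧
    feq (FW (tauW (invIdx i) ++ tauW i)) (FW []) = true ∧
    feq (FW (upsW i ++ upsW (invIdx i))) (FW []) = true ∧
    feq (FW (upsW (invIdx i) ++ upsW i)) (FW []) = true := by decide

lemma tau_swap : ∀ i : Fin 8, tauW (swapIdx i) = upsW i ∧ upsW (swapIdx i) = tauW i := by decide

lemma tau_distinct : ∀ i j : Fin 8,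
    (Mfuns.any fun m => feq (FW (tauW i)) (FW (tauW j) ∘ m)) = true → i = j := by decide

lemma ups_distinct : ∀ i j : Fin 8,
    (Mfuns.any fun m => feq (FW (upsW i)) (FW (upsW j) ∘ m)) = true → i = j := by decide

/-- The pair invariant: `(x, y)` lies (mod level-3 `B`-cosets) on the graph of θ. -/
def TT (x y : Grig) : Prop :=
  ∃ i : Fin 8, relB x (evalG (tauW i)) ∧ relB y (evalG (upsW i))

lemma TT_one : TT 1 1 :=
  ⟨0, relB_refl 1, relB_refl 1⟩

lemma TT_mul {x y x' y' : Grig} (h : TT x y) (h' : TT x' y') : TT (x * x') (y * y') := by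
  obtain ⟨i, hx, hy⟩ := h
  obtain ⟨j, hx', hy'⟩ := h'
  exact ⟨mulIdx i j, relB_mul hx hx' (feq_eq (tau_mul_f i j).1),
    relB_mul hy hy' (feq_eq (tau_mul_f i j).2)⟩

lemma TT_inv {x y : Grig} (h : TT x y) : TT x⁻¹ y⁻¹ := by
  obtain ⟨i, hx, hy⟩ := h
  obtain ⟨e1, e2, e3, e4⟩ := tau_inv_f i
  exact ⟨invIdx i, relB_inv hx (feq_eq e1) (feq_eq e2), relB_inv hy (feq_eq e3) (feq_eq e4)⟩

lemma TT_symm {x y : Grig} (h : TT x y) : TT y x := by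
  obtain ⟨i, hx, hy⟩ := h
  refine ⟨swapIdx i, ?_, ?_⟩
  · rw [(tau_swap i).1]; exact hy
  · rw [(tau_swap i).2]; exact hx

/-- Functionality: the τ-words are in pairwise distinct cosets. -/
lemma tau_funct {i j : Fin 8} (h : relB (evalG (tauW i)) (evalG (tauW j))) : i = j := by
  obtain ⟨m, hm, he⟩ := h
  rw [res3_evalG, res3_evalG] at he
  refine tau_distinct i j (List.any_eq_true.2 ⟨m, hm, ?_⟩)
  rw [he]; exact feq_refl _

lemma ups_funct {i j : Fin 8} (h : relB (evalG (upsW i)) (evalG (upsW j))) : i = j := by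
  obtain ⟨m, hm, he⟩ := h
  rw [res3_evalG, res3_evalG] at he
  refine ups_distinct i j (List.any_eq_true.2 ⟨m, hm, ?_⟩)
  rw [he]; exact feq_refl _

end RelTT
section Master

/-- `x` fixes the first letter, with sections `g₀, g₁`. -/
def IsFix (x : Equiv.Perm (List Bool)) (g₀ g₁ : Grig) : Prop :=
  x [] = [] ∧ ∀ σ : List Bool,
    x (false :: σ) = false :: (g₀ : Equiv.Perm (List Bool)) σ ∧
    x (true :: σ) = true :: (g₁ : Equiv.Perm (List Bool)) σ

/-- `x` swaps the first letter, with sections `g₀, g₁`. -/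
def IsSwp (x : Equiv.Perm (List Bool)) (g₀ g₁ : Grig) : Prop :=
  x [] = [] ∧ ∀ σ : List Bool,
    x (false :: σ) = true :: (g₀ : Equiv.Perm (List Bool)) σ ∧
    x (true :: σ) = false :: (g₁ : Equiv.Perm (List Bool)) σ

lemma relB_gen_self (ℓ : Ltr) : relB (genG ℓ) (evalG [ℓ]) :=
  ⟨id, M_one, by rw [res3_gen, res3_evalG, Function.comp_id]⟩

lemma relB_c_d : relB gc (evalG [.D]) := by
  have h : (Mfuns.any fun m => feq (FW [.C]) (FW [.D] ∘ m)) = true := by decide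
  obtain ⟨m, hm, e⟩ := List.any_eq_true.1 h
  refine ⟨m, hm, ?_⟩
  rw [res3_evalG, show res3 ⇑((gc : Grig) : Equiv.Perm (List Bool)) = FW [.C] from res3_gen .C]
  exact feq_eq e

lemma relB_b_one : relB gb (evalG []) := by
  have h : (Mfuns.any fun m => feq (FW [.B]) (FW [] ∘ m)) = true := by decide
  obtain ⟨m, hm, e⟩ := List.any_eq_true.1 h
  refine ⟨m, hm, ?_⟩
  rw [res3_evalG, show res3 ⇑((gb : Grig) : Equiv.Perm (List Bool)) = FW [.B] from res3_gen .B]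
  exact feq_eq e

lemma relB_one_nil : relB 1 (evalG []) := relB_refl 1

lemma TT_b : TT ga gc := ⟨1, relB_gen_self .A, relB_c_d⟩
lemma TT_c : TT ga gd := ⟨1, relB_gen_self .A, relB_gen_self .D⟩
lemma TT_d : TT 1 gb := ⟨0, relB_one_nil, relB_b_one⟩

/-- The master decomposition: every element of the Grigorchuk group either fixes or
swaps the first letter, has sections in the group, and its section pair satisfies
the `TT` invariant. -/
lemma master {x : Equiv.Perm (List Bool)} (hx : x ∈ Grig) :
    (∃ g₀ g₁ : Grig, IsFix x g₀ g₁ ∧ TT g₀ g₁) ∨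
    (∃ g₀ g₁ : Grig, IsSwp x g₀ g₁ ∧ TT g₁ g₀) := by
  induction hx using Subgroup.closure_induction with
  | mem y hy =>
      rcases hy with h | h | h | h <;> subst h
      · exact Or.inr ⟨1, 1, ⟨rfl, fun σ => ⟨rfl, rfl⟩⟩, TT_one⟩
      · exact Or.inl ⟨ga, gc, ⟨rfl, fun σ => ⟨rfl, rfl⟩⟩, TT_b⟩
      · exact Or.inl ⟨ga, gd, ⟨rfl, fun σ => ⟨rfl, rfl⟩⟩, TT_c⟩
      · exact Or.inl ⟨1, gb, ⟨rfl, fun σ => ⟨rfl, rfl⟩⟩, TT_d⟩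
  | one => exact Or.inl ⟨1, 1, ⟨rfl, fun σ => ⟨rfl, rfl⟩⟩, TT_one⟩
  | mul y z _ _ ihy ihz =>
      have hyz : ∀ l, (y * z) l = y (z l) := fun l => rfl
      rcases ihy with ⟨p, q, ⟨hy0, hyσ⟩, hty⟩ | ⟨p, q, ⟨hy0, hyσ⟩, hty⟩ <;>
        rcases ihz with ⟨p', q', ⟨hz0, hzσ⟩, htz⟩ | ⟨p', q', ⟨hz0, hzσ⟩, htz⟩
      · refine Or.inl ⟨p * p', q * q', ⟨?_, fun σ => ⟨?_, ?_⟩⟩, TT_mul hty htz⟩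
        · rw [hyz, hz0, hy0]
        · rw [hyz, (hzσ σ).1, (hyσ _).1]; rfl
        · rw [hyz, (hzσ σ).2, (hyσ _).2]; rfl
      · refine Or.inr ⟨q * p', p * q', ⟨?_, fun σ => ⟨?_, ?_⟩⟩, ?_⟩
        · rw [hyz, hz0, hy0]
        · rw [hyz, (hzσ σ).1, (hyσ _).2]; rfl
        · rw [hyz, (hzσ σ).2, (hyσ _).1]; rfl
        · exact TT_mul hty htz
      · refine Or.inr ⟨p * p', q * q', ⟨?_, fun σ => ⟨?_, ?_⟩⟩, ?_⟩
        · rw [hyz, hz0, hy0]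
        · rw [hyz, (hzσ σ).1, (hyσ _).1]; rfl
        · rw [hyz, (hzσ σ).2, (hyσ _).2]; rfl
        · exact TT_mul hty (TT_symm htz)
      · refine Or.inl ⟨q * p', p * q', ⟨?_, fun σ => ⟨?_, ?_⟩⟩, ?_⟩
        · rw [hyz, hz0, hy0]
        · rw [hyz, (hzσ σ).1, (hyσ _).2]; rfl
        · rw [hyz, (hzσ σ).2, (hyσ _).1]; rfl
        · exact TT_mul hty (TT_symm htz)
  | inv y _ ih =>
      rcases ih with ⟨p, q, ⟨hy0, hyσ⟩, hty⟩ | ⟨p, q, ⟨hy0, hyσ⟩, hty⟩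
      · refine Or.inl ⟨p⁻¹, q⁻¹, ⟨?_, fun σ => ⟨?_, ?_⟩⟩, TT_inv hty⟩
        · rw [show (y⁻¹ : Equiv.Perm (List Bool)) = y.symm from rfl, Equiv.symm_apply_eq, hy0]
        · rw [show (y⁻¹ : Equiv.Perm (List Bool)) = y.symm from rfl, Equiv.symm_apply_eq,
            (hyσ _).1]
          simp
        · rw [show (y⁻¹ : Equiv.Perm (List Bool)) = y.symm from rfl, Equiv.symm_apply_eq,
            (hyσ _).2]
          simp
      · refine Or.inr ⟨q⁻¹, p⁻¹, ⟨?_, fun σ => ⟨?_, ?_⟩⟩, ?_⟩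
        · rw [show (y⁻¹ : Equiv.Perm (List Bool)) = y.symm from rfl, Equiv.symm_apply_eq, hy0]
        · rw [show (y⁻¹ : Equiv.Perm (List Bool)) = y.symm from rfl, Equiv.symm_apply_eq,
            (hyσ _).2]
          simp
        · rw [show (y⁻¹ : Equiv.Perm (List Bool)) = y.symm from rfl, Equiv.symm_apply_eq,
            (hyσ _).1]
          simp
        · exact TT_inv (TT_symm hty)

/-- The first-level stabilizer as a subgroup. -/
def Hsub : Subgroup Grig where
  carrier := {g : Grig | FixesFirst (g : Equiv.Perm (List Bool))}
  one_mem' := fun x σ => ⟨σ, rfl⟩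
  mul_mem' := by
    intro g h hg hh x σ
    obtain ⟨σ', hσ'⟩ := hh x σ
    obtain ⟨σ'', hσ''⟩ := hg x σ'
    exact ⟨σ'', by rw [show ((g * h : Grig) : Equiv.Perm (List Bool)) (x :: σ) =
      (g : Equiv.Perm (List Bool)) ((h : Equiv.Perm (List Bool)) (x :: σ)) from rfl, hσ', hσ'']⟩
  inv_mem' := by
    intro g hg
    rcases master g.2 with ⟨p, q, ⟨h0, hσ⟩, _⟩ | ⟨p, q, ⟨h0, hσ⟩, _⟩
    · intro x σ
      cases x
      · refine ⟨((p⁻¹ : Grig) : Equiv.Perm (List Bool)) σ, ?_⟩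
        rw [show ((g⁻¹ : Grig) : Equiv.Perm (List Bool)) =
          ((g : Grig) : Equiv.Perm (List Bool)).symm from rfl, Equiv.symm_apply_eq, (hσ _).1]
        simp
      · refine ⟨((q⁻¹ : Grig) : Equiv.Perm (List Bool)) σ, ?_⟩
        rw [show ((g⁻¹ : Grig) : Equiv.Perm (List Bool)) =
          ((g : Grig) : Equiv.Perm (List Bool)).symm from rfl, Equiv.symm_apply_eq, (hσ _).2]
        simp
    · obtain ⟨σ', hσ'⟩ := hg false []
      rw [(hσ []).1] at hσ'
      simp at hσ'

lemma mem_Hsub {g : Grig} : g ∈ Hsub ↔ FixesFirst (g : Equiv.Perm (List Bool)) := Iff.rfl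

lemma sections_exist {g : Grig} (hg : g ∈ Hsub) :
    ∃ p q : Grig, IsFix (g : Equiv.Perm (List Bool)) p q ∧ TT p q := by
  rcases master g.2 with h | ⟨p, q, ⟨h0, hσ⟩, _⟩
  · exact h
  · obtain ⟨σ', hσ'⟩ := hg false []
    rw [(hσ []).1] at hσ'
    simp at hσ'

lemma IsFix_unique {x : Equiv.Perm (List Bool)} {p q p' q' : Grig}
    (h : IsFix x p q) (h' : IsFix x p' q') : p = p' ∧ q = q' := by
  refine ⟨Subtype.ext (Equiv.ext fun σ => ?_), Subtype.ext (Equiv.ext fun σ => ?_)⟩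
  · have e1 := (h.2 σ).1
    have e2 := (h'.2 σ).1
    rw [e1] at e2
    simpa using e2
  · have e1 := (h.2 σ).2
    have e2 := (h'.2 σ).2
    rw [e1] at e2
    simpa using e2

/-- The section map. -/
noncomputable def sec (h : Hsub) : Grig × Grig :=
  ⟨(sections_exist h.2).choose, (sections_exist h.2).choose_spec.choose⟩

lemma sec_spec (h : Hsub) :
    IsFix ((h : Grig) : Equiv.Perm (List Bool)) (sec h).1 (sec h).2 ∧ TT (sec h).1 (sec h).2 :=
  (sections_exist h.2).choose_spec.choose_spec

/-- `ψ` as a monoid hom. -/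
noncomputable def psiH : Hsub →* Grig × Grig :=
  MonoidHom.mk' sec (by
    intro h₁ h₂
    have s1 := (sec_spec h₁).1
    have s2 := (sec_spec h₂).1
    have s12 := (sec_spec (h₁ * h₂)).1
    have hmul : IsFix (((h₁ * h₂ : Hsub) : Grig) : Equiv.Perm (List Bool))
        ((sec h₁).1 * (sec h₂).1) ((sec h₁).2 * (sec h₂).2) := by
      refine ⟨?_, fun σ => ⟨?_, ?_⟩⟩
      · show ((h₁ : Grig) : Equiv.Perm (List Bool)) (((h₂ : Grig) : Equiv.Perm (List Bool)) []) = []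
        rw [s2.1, s1.1]
      · show ((h₁ : Grig) : Equiv.Perm (List Bool))
          (((h₂ : Grig) : Equiv.Perm (List Bool)) (false :: σ)) = _
        rw [(s2.2 σ).1, (s1.2 _).1]; rfl
      · show ((h₁ : Grig) : Equiv.Perm (List Bool))
          (((h₂ : Grig) : Equiv.Perm (List Bool)) (true :: σ)) = _
        rw [(s2.2 σ).2, (s1.2 _).2]; rfl
    obtain ⟨e1, e2⟩ := IsFix_unique s12 hmul
    exact Prod.ext e1 e2)

lemma psiH_prop : PsiProp Hsub psiH := by
  intro h σ
  exact ⟨((sec_spec h).1.2 σ).1, ((sec_spec h).1.2 σ).2⟩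

lemma psiH_TT (h : Hsub) : TT (psiH h).1 (psiH h).2 := (sec_spec h).2

end Master
section Words

/-- The generating set. -/
def Sgen : Set Grig := {ga, gb, gc, gd}

lemma genG_mem_S (ℓ : Ltr) : genG ℓ ∈ Sgen := by
  cases ℓ <;> simp [Sgen, genG]

@[simp] lemma gA_gA (l : List Bool) : grigA (grigA l) = l := grigA_involutive l
@[simp] lemma gB_gB (l : List Bool) : grigB (grigB l) = l := grigB_involutive l
@[simp] lemma gC_gC (l : List Bool) : grigC (grigC l) = l := grigC_involutive l
@[simp] lemma gD_gD (l : List Bool) : grigD (grigD l) = l := grigD_involutive l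

lemma gen_sq (ℓ : Ltr) : genG ℓ * genG ℓ = 1 := by
  cases ℓ <;>
    exact Subtype.ext (Equiv.ext fun l => by
      first
        | exact grigA_involutive l
        | exact grigB_involutive l
        | exact grigC_involutive l
        | exact grigD_involutive l)

lemma gen_inv (ℓ : Ltr) : (genG ℓ)⁻¹ = genG ℓ := by
  rw [inv_eq_iff_mul_eq_one, gen_sq]

lemma evalG_singleton (ℓ : Ltr) : evalG [ℓ] = genG ℓ := by
  simp

lemma evalG_reverse (w : List Ltr) : evalG w.reverse = (evalG w)⁻¹ := by
  induction w with
  | nil => simp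
  | cons ℓ w ih =>
      rw [List.reverse_cons, evalG_append, ih, evalG_singleton,
        show evalG (ℓ :: w) = genG ℓ * evalG w from evalG_cons ℓ w, mul_inv_rev, gen_inv]

lemma exists_word (g : Grig) : ∃ w : List Ltr, evalG w = g := by
  obtain ⟨x, hx⟩ := g
  suffices h : ∃ w : List Ltr, ((evalG w : Grig) : Equiv.Perm (List Bool)) = x by
    obtain ⟨w, hw⟩ := h
    exact ⟨w, Subtype.ext hw⟩
  induction hx using Subgroup.closure_induction with
  | mem y hy =>
      rcases hy with h | h | h | h <;> subst h
      · exact ⟨[.A], Equiv.ext fun l => by rw [val_evalG]; rfl⟩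
      · exact ⟨[.B], Equiv.ext fun l => by rw [val_evalG]; rfl⟩
      · exact ⟨[.C], Equiv.ext fun l => by rw [val_evalG]; rfl⟩
      · exact ⟨[.D], Equiv.ext fun l => by rw [val_evalG]; rfl⟩
  | one => exact ⟨[], rfl⟩
  | mul y z _ _ ihy ihz =>
      obtain ⟨w₁, h₁⟩ := ihy
      obtain ⟨w₂, h₂⟩ := ihz
      exact ⟨w₁ ++ w₂, by rw [evalG_append]; push_cast [h₁, h₂]; rfl⟩
  | inv y _ ih =>
      obtain ⟨w, hw⟩ := ih
      refine ⟨w.reverse, ?_⟩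
      rw [evalG_reverse]
      rw [show ((((evalG w)⁻¹ : Grig)) : Equiv.Perm (List Bool)) =
        (((evalG w : Grig) : Equiv.Perm (List Bool)))⁻¹ from rfl, hw]

lemma wordLength_le {g : Grig} {w : List Ltr} (h : evalG w = g) :
    wordLength Sgen g ≤ w.length := by
  apply Nat.sInf_le
  refine ⟨w.map genG, fun s hs => ?_, ?_, by simp⟩
  · obtain ⟨ℓ, _, rfl⟩ := List.mem_map.1 hs
    exact genG_mem_S ℓ
  · exact h

lemma list_to_word : ∀ l : List Grig, (∀ s ∈ l, s ∈ Sgen) →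
    ∃ w : List Ltr, evalG w = l.prod ∧ w.length = l.length := by
  intro l
  induction l with
  | nil => exact fun _ => ⟨[], rfl, rfl⟩
  | cons s l ih =>
      intro hl
      obtain ⟨w, hw, hlen⟩ := ih fun t ht => hl t (List.mem_cons_of_mem s ht)
      have hs := hl s List.mem_cons_self
      rcases hs with h | h | h | h
      · exact ⟨.A :: w, by rw [evalG_cons, hw, List.prod_cons, h]; rfl, by simp [hlen]⟩
      · exact ⟨.B :: w, by rw [evalG_cons, hw, List.prod_cons, h]; rfl, by simp [hlen]⟩
      · exact ⟨.C :: w, by rw [evalG_cons, hw, List.prod_cons, h]; rfl, by simp [hlen]⟩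
      · exact ⟨.D :: w, by rw [evalG_cons, hw, List.prod_cons,
          show s = gd from h]; rfl, by simp [hlen]⟩

lemma exists_minword (g : Grig) :
    ∃ w : List Ltr, evalG w = g ∧ w.length = wordLength Sgen g := by
  have hne : {n : ℕ | ∃ l : List Grig, (∀ s ∈ l, s ∈ Sgen) ∧ l.prod = g ∧ l.length = n}.Nonempty := by
    obtain ⟨w, hw⟩ := exists_word g
    exact ⟨w.length, w.map genG, fun s hs => by
      obtain ⟨ℓ, _, rfl⟩ := List.mem_map.1 hs; exact genG_mem_S ℓ, hw, by simp⟩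
  have hmem := Nat.sInf_mem hne
  obtain ⟨l, hl, hprod, hlen⟩ := hmem
  obtain ⟨w, hw, hwl⟩ := list_to_word l hl
  exact ⟨w, hw.trans hprod, by rw [hwl, hlen]; rfl⟩

/-! ### Alternating words -/

def isA : Ltr → Bool | .A => true | _ => false

def Alt (w : List Ltr) : Prop := List.Chain' (fun p q => isA p ≠ isA q) w

lemma mul_bc : gb * gc = gd := Subtype.ext (Equiv.ext fun l => (mulBCD l).1)
lemma mul_cd : gc * gd = gb := Subtype.ext (Equiv.ext fun l => (mulBCD l).2.1)
lemma mul_db : gd * gb = gc := Subtype.ext (Equiv.ext fun l => (mulBCD l).2.2.1)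
lemma mul_cb : gc * gb = gd := Subtype.ext (Equiv.ext fun l => (mulBCD l).2.2.2.1)
lemma mul_dc : gd * gc = gb := Subtype.ext (Equiv.ext fun l => (mulBCD l).2.2.2.2.1)
lemma mul_bd : gb * gd = gc := Subtype.ext (Equiv.ext fun l => (mulBCD l).2.2.2.2.2)

lemma letter_pair {p q : Ltr} (h : isA p = isA q) :
    genG p * genG q = 1 ∨
      (isA p = false ∧ isA q = false ∧
        ∃ r : Ltr, genG p * genG q = genG r ∧ isA r = false) := by
  cases p <;> cases q <;>
    first
      | exact absurd h (by decide)
      | exact Or.inl (gen_sq _)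
      | exact Or.inr ⟨rfl, rfl, .B, by simpa [genG] using mul_cd, rfl⟩
      | exact Or.inr ⟨rfl, rfl, .B, by simpa [genG] using mul_dc, rfl⟩
      | exact Or.inr ⟨rfl, rfl, .C, by simpa [genG] using mul_db, rfl⟩
      | exact Or.inr ⟨rfl, rfl, .C, by simpa [genG] using mul_bd, rfl⟩
      | exact Or.inr ⟨rfl, rfl, .D, by simpa [genG] using mul_bc, rfl⟩
      | exact Or.inr ⟨rfl, rfl, .D, by simpa [genG] using mul_cb, rfl⟩

lemma alt_reduce : ∀ (n : ℕ) (w : List Ltr), w.length ≤ n →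
    ∃ w', evalG w' = evalG w ∧ w'.length ≤ w.length ∧ Alt w' := by
  intro n
  induction n with
  | zero =>
      intro w hw
      rw [Nat.le_zero, List.length_eq_zero_iff] at hw
      subst hw
      exact ⟨[], rfl, le_refl _, List.isChain_nil⟩
  | succ n ih =>
      intro w hw
      match w with
      | [] => exact ⟨[], rfl, le_refl _, List.isChain_nil⟩
      | [p] => exact ⟨[p], rfl, le_refl _, List.isChain_singleton p⟩
      | p :: q :: t =>
        by_cases hpq : isA p = isA q
        · rcases letter_pair hpq with h1 | ⟨_, _, r, hr, _⟩
          · obtain ⟨w', e, len, alt⟩ := ih t (by simp at hw ⊢; omega)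
            refine ⟨w', ?_, by simp; omega, alt⟩
            rw [e, evalG_cons, evalG_cons, ← mul_assoc, h1, one_mul]
          · obtain ⟨w', e, len, alt⟩ := ih (r :: t) (by simp at hw ⊢; omega)
            refine ⟨w', ?_, by simp at len ⊢; omega, alt⟩
            rw [e, evalG_cons, evalG_cons, evalG_cons, ← mul_assoc, hr]
        · obtain ⟨w', e, len, alt⟩ := ih (q :: t) (by simp at hw ⊢; omega)
          match w', alt with
          | [], _ =>
              refine ⟨[p], ?_, by simp, List.isChain_singleton p⟩
              rw [evalG_cons (w := q :: t), ← e]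
              simp
          | z :: t', alt =>
            by_cases hpz : isA p = isA z
            · rcases letter_pair hpz with h1 | ⟨_, hzA, r, hr, hrA⟩
              · refine ⟨t', ?_, ?_, alt.tail⟩
                · rw [evalG_cons (w := q :: t), ← e, evalG_cons, ← mul_assoc, h1, one_mul]
                · simp at len ⊢; omega
              · refine ⟨r :: t', ?_, ?_, ?_⟩
                · rw [evalG_cons (w := q :: t), ← e, evalG_cons, evalG_cons, ← mul_assoc, hr]
                · simp at len ⊢; omega
                · rw [Alt, List.Chain', List.isChain_cons]
                  refine ⟨?_, alt.tail⟩
                  intro y hy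
                  have hzy := (List.isChain_cons.1 alt).1 y hy
                  rw [hzA] at hzy
                  rw [hrA]
                  exact hzy
            · exact ⟨p :: z :: t', by
                rw [evalG_cons (w := q :: t), ← e, evalG_cons], by simp at len ⊢; omega,
                List.isChain_cons_cons.2 ⟨hpz, alt⟩⟩

end Words
section Subst

def s0 : Ltr → List Ltr
  | .A => [.C] | .B => [.A,.D,.A] | .C => [.A,.B,.A] | .D => [.A,.C,.A]

def s1 : Ltr → List Ltr
  | .A => [.A,.C,.A] | .B => [.D] | .C => [.B] | .D => [.C]

def jk : Ltr → List Ltr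
  | .A => [.D] | .B => [] | .C => [.A] | .D => [.A]

def sub0 : List Ltr → List Ltr
  | [] => [] | ℓ :: w => s0 ℓ ++ sub0 w

def sub1 : List Ltr → List Ltr
  | [] => [] | ℓ :: w => s1 ℓ ++ sub1 w

def jkW : List Ltr → List Ltr
  | [] => [] | ℓ :: w => jk ℓ ++ jkW w

lemma actL_nil (ℓ : Ltr) : actL ℓ [] = [] := by cases ℓ <;> rfl

lemma applyW_nil : ∀ w : List Ltr, applyW w [] = [] := by
  intro w
  induction w with
  | nil => rfl
  | cons ℓ w ih => simp [applyW, ih, actL_nil]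

lemma jkW_AD : ∀ (w : List Ltr) (ℓ : Ltr), ℓ ∈ jkW w → ℓ = .A ∨ ℓ = .D := by
  intro w
  induction w with
  | nil => intro ℓ h; simp [jkW] at h
  | cons p w ih =>
      intro ℓ h
      rw [jkW, List.mem_append] at h
      rcases h with h | h
      · cases p <;> simp [jk] at h <;> simp [h]
      · exact ih ℓ h

lemma sub0_sections : ∀ (w : List Ltr) (σ : List Bool),
    applyW (sub0 w) (false :: σ) = false :: applyW w σ ∧
    applyW (sub0 w) (true :: σ) = true :: applyW (jkW w) σ := by
  intro w
  induction w with
  | nil => intro σ; exact ⟨rfl, rfl⟩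
  | cons ℓ w ih =>
      intro σ
      have h0 := (ih σ).1
      have h1 := (ih σ).2
      constructor
      · rw [sub0, applyW_append, h0]
        cases ℓ <;> simp [s0, jkW, jk, applyW, actL, grigA, grigB, grigC, grigD]
      · rw [sub0, applyW_append, h1]
        cases ℓ <;> simp [s0, jkW, jk, applyW, actL, grigA, grigB, grigC, grigD, applyW_append]

lemma sub1_sections : ∀ (w : List Ltr) (σ : List Bool),
    applyW (sub1 w) (false :: σ) = false :: applyW (jkW w) σ ∧
    applyW (sub1 w) (true :: σ) = true :: applyW w σ := by
  intro w
  induction w with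
  | nil => intro σ; exact ⟨rfl, rfl⟩
  | cons ℓ w ih =>
      intro σ
      have h0 := (ih σ).1
      have h1 := (ih σ).2
      constructor
      · rw [sub1, applyW_append, h0]
        cases ℓ <;> simp [s1, jkW, jk, applyW, actL, grigA, grigB, grigC, grigD, applyW_append]
      · rw [sub1, applyW_append, h1]
        cases ℓ <;> simp [s1, jkW, jk, applyW, actL, grigA, grigB, grigC, grigD]

lemma sub0_applyW_nil (w : List Ltr) : applyW (sub0 w) [] = [] := applyW_nil _
lemma sub1_applyW_nil (w : List Ltr) : applyW (sub1 w) [] = [] := applyW_nil _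

/-! ### Length bounds -/

def bonus0 : List Ltr → ℕ
  | [] => 0
  | ℓ :: _ => if isA ℓ then 0 else 1

def bonus1 : List Ltr → ℕ
  | [] => 0
  | ℓ :: _ => if isA ℓ then 1 else 0

lemma sub0_len_aux : ∀ w : List Ltr, Alt w → (sub0 w).length ≤ 2 * w.length + bonus0 w := by
  intro w
  induction w with
  | nil => intro _; simp [sub0, bonus0]
  | cons ℓ t ih =>
      intro halt
      have hlen := ih halt.tail
      rw [sub0, List.length_append]
      match t, halt with
      | [], _ =>
          cases ℓ <;> simp [s0, sub0, bonus0, isA]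
      | m :: t', halt =>
          have hne : isA ℓ ≠ isA m := (List.isChain_cons_cons.1 halt).1
          cases hℓ : isA ℓ
          · have hm : isA m = true := by
              cases hm' : isA m
              · rw [hℓ, hm'] at hne; exact absurd rfl hne
              · rfl
            have hs : (s0 ℓ).length = 3 := by
              cases ℓ <;> first | rfl | (exfalso; simp [isA] at hℓ)
            have hb : bonus0 (m :: t') = 0 := by simp [bonus0, hm]
            have hb' : bonus0 (ℓ :: m :: t') = 1 := by simp [bonus0, hℓ]
            rw [hb] at hlen
            rw [hs, hb']
            simp only [List.length_cons] at hlen ⊢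
            omega
          · have hm : isA m = false := by
              cases hm' : isA m
              · rfl
              · rw [hℓ, hm'] at hne; exact absurd rfl hne
            have hs : (s0 ℓ).length = 1 := by
              cases ℓ <;> first | rfl | (exfalso; simp [isA] at hℓ)
            have hb : bonus0 (m :: t') = 1 := by simp [bonus0, hm]
            have hb' : bonus0 (ℓ :: m :: t') = 0 := by simp [bonus0, hℓ]
            rw [hb] at hlen
            rw [hs, hb']
            simp only [List.length_cons] at hlen ⊢
            omega

lemma sub0_len {w : List Ltr} (h : Alt w) : (sub0 w).length ≤ 2 * w.length + 1 := by
  have h1 := sub0_len_aux w h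
  have h2 : bonus0 w ≤ 1 := by
    match w with
    | [] => simp [bonus0]
    | ℓ :: t => simp only [bonus0]; split <;> omega
  omega

lemma sub1_len_aux : ∀ w : List Ltr, Alt w → (sub1 w).length ≤ 2 * w.length + bonus1 w := by
  intro w
  induction w with
  | nil => intro _; simp [sub1, bonus1]
  | cons ℓ t ih =>
      intro halt
      have hlen := ih halt.tail
      rw [sub1, List.length_append]
      match t, halt with
      | [], _ =>
          cases ℓ <;> simp [s1, sub1, bonus1, isA]
      | m :: t', halt =>
          have hne : isA ℓ ≠ isA m := (List.isChain_cons_cons.1 halt).1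
          cases hℓ : isA ℓ
          · have hm : isA m = true := by
              cases hm' : isA m
              · rw [hℓ, hm'] at hne; exact absurd rfl hne
              · rfl
            have hs : (s1 ℓ).length = 1 := by
              cases ℓ <;> first | rfl | (exfalso; simp [isA] at hℓ)
            have hb : bonus1 (m :: t') = 1 := by simp [bonus1, hm]
            have hb' : bonus1 (ℓ :: m :: t') = 0 := by simp [bonus1, hℓ]
            rw [hb] at hlen
            rw [hs, hb']
            simp only [List.length_cons] at hlen ⊢
            omega
          · have hm : isA m = false := by
              cases hm' : isA m
              · rfl
              · rw [hℓ, hm'] at hne; exact absurd rfl hne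
            have hs : (s1 ℓ).length = 3 := by
              cases ℓ <;> first | rfl | (exfalso; simp [isA] at hℓ)
            have hb : bonus1 (m :: t') = 0 := by simp [bonus1, hm]
            have hb' : bonus1 (ℓ :: m :: t') = 1 := by simp [bonus1, hℓ]
            rw [hb] at hlen
            rw [hs, hb']
            simp only [List.length_cons] at hlen ⊢
            omega

lemma sub1_len {w : List Ltr} (h : Alt w) : (sub1 w).length ≤ 2 * w.length + 1 := by
  have h1 := sub1_len_aux w h
  have h2 : bonus1 w ≤ 1 := by
    match w with
    | [] => simp [bonus1]
    | ℓ :: t => simp only [bonus1]; split <;> omega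
  omega

/-! ### Normal forms in the dihedral group generated by a and d -/

lemma mul_tau_a : ∀ i : Fin 8, ga * evalG (tauW i) = evalG (tauW (mulIdx 1 i)) := by
  intro i
  refine Subtype.ext (Equiv.ext fun l => ?_)
  have hL : ∀ (w : List Ltr) (l : List Bool),
      ((ga * evalG w : Grig) : Equiv.Perm (List Bool)) l = grigA (applyW w l) := by
    intro w l
    have h1 : ((ga * evalG w : Grig) : Equiv.Perm (List Bool)) l =
        (ga : Equiv.Perm (List Bool)) (((evalG w : Grig) : Equiv.Perm (List Bool)) l) := rfl
    rw [h1, val_evalG]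
    rfl
  fin_cases i <;>
    simp only [tauW, mulIdx, hL, val_evalG, Matrix.cons_val_zero, Matrix.cons_val_one, Matrix.cons_val, Fin.reduceFinMk, Fin.isValue] <;>
    simp only [applyW, actL] <;>
    simp

lemma mul_tau_d : ∀ i : Fin 8, gd * evalG (tauW i) = evalG (tauW (mulIdx 2 i)) := by
  intro i
  refine Subtype.ext (Equiv.ext fun l => ?_)
  have hL : ∀ (w : List Ltr) (l : List Bool),
      ((gd * evalG w : Grig) : Equiv.Perm (List Bool)) l = grigD (applyW w l) := by
    intro w l
    have h1 : ((gd * evalG w : Grig) : Equiv.Perm (List Bool)) l =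
        (gd : Equiv.Perm (List Bool)) (((evalG w : Grig) : Equiv.Perm (List Bool)) l) := rfl
    rw [h1, val_evalG]
    rfl
  fin_cases i <;>
    simp only [tauW, mulIdx, hL, val_evalG, Matrix.cons_val_zero, Matrix.cons_val_one, Matrix.cons_val, Fin.reduceFinMk, Fin.isValue] <;>
    simp only [applyW, actL] <;>
    first
      | simp
      | exact dada_eq_adad l
      | (rw [dada_eq_adad (grigD l)]; simp)

lemma d4_nf : ∀ w : List Ltr, (∀ ℓ ∈ w, ℓ = .A ∨ ℓ = .D) →
    ∃ i : Fin 8, evalG w = evalG (tauW i) := by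
  intro w
  induction w with
  | nil => exact fun _ => ⟨0, rfl⟩
  | cons ℓ w ih =>
      intro h
      obtain ⟨i, e⟩ := ih fun m hm => h m (List.mem_cons_of_mem ℓ hm)
      rcases h ℓ List.mem_cons_self with rfl | rfl
      · exact ⟨mulIdx 1 i, by rw [evalG_cons, e, show genG Ltr.A = ga from rfl, mul_tau_a]⟩
      · exact ⟨mulIdx 2 i, by rw [evalG_cons, e, show genG Ltr.D = gd from rfl, mul_tau_d]⟩

end Subst
section Final

lemma relB_refl_evalG (w : List Ltr) : relB (evalG w) (evalG w) := relB_refl _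

lemma TT_letter0 : ∀ ℓ : Ltr, TT (genG ℓ) (evalG (jk ℓ))
  | .A => ⟨1, relB_gen_self .A, relB_gen_self .D⟩
  | .B => ⟨0, relB_b_one, relB_refl _⟩
  | .C => ⟨2, relB_c_d, relB_gen_self .A⟩
  | .D => ⟨2, relB_gen_self .D, relB_gen_self .A⟩

lemma TT_letter1 : ∀ ℓ : Ltr, TT (evalG (jk ℓ)) (genG ℓ)
  | .A => ⟨2, relB_gen_self .D, relB_gen_self .A⟩
  | .B => ⟨0, relB_refl _, relB_b_one⟩
  | .C => ⟨1, relB_gen_self .A, relB_c_d⟩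
  | .D => ⟨1, relB_gen_self .A, relB_gen_self .D⟩

lemma TT_evalG_congr {x x' y y' : Grig} (hx : x = x') (hy : y = y') (h : TT x y) : TT x' y' :=
  hx ▸ hy ▸ h

lemma genG_eq_evalG (ℓ : Ltr) : genG ℓ = evalG [ℓ] := (evalG_singleton ℓ).symm

lemma TT_word0 : ∀ w : List Ltr, TT (evalG w) (evalG (jkW w)) := by
  intro w
  induction w with
  | nil => exact TT_one
  | cons ℓ w ih =>
      have h := TT_mul (TT_letter0 ℓ) ih
      refine TT_evalG_congr ?_ ?_ h
      · rw [evalG_cons]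
      · rw [jkW, evalG_append]

lemma TT_word1 : ∀ w : List Ltr, TT (evalG (jkW w)) (evalG w) := by
  intro w
  induction w with
  | nil => exact TT_one
  | cons ℓ w ih =>
      have h := TT_mul (TT_letter1 ℓ) ih
      refine TT_evalG_congr ?_ ?_ h
      · rw [jkW, evalG_append]
      · rw [evalG_cons]

/-- Correction words with section pair `(τ_k, υ_k)`. -/
def corrW : Fin 8 → List Ltr :=
  ![[], [.C], [.A,.C,.A], [.C,.A,.C,.A], [.A,.C,.A,.C], [.C,.A,.C,.A,.C],
    [.A,.C,.A,.C,.A,.C,.A], [.C,.A,.C,.A,.C,.A,.C,.A]]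

lemma corr_len : ∀ k : Fin 8, (corrW k).length ≤ 8 := by decide

lemma corr_sections : ∀ (k : Fin 8) (σ : List Bool),
    applyW (corrW k) (false :: σ) = false :: applyW (tauW k) σ ∧
    applyW (corrW k) (true :: σ) = true :: applyW (upsW k) σ := by
  intro k σ
  fin_cases k <;>
    constructor <;>
    simp only [corrW, tauW, upsW, Matrix.cons_val_zero, Matrix.cons_val_one, Matrix.cons_val, Fin.reduceFinMk, Fin.isValue, applyW, actL] <;>
    first
      | (simp [grigA, grigB, grigC, grigD]; done)
      | (simp [grigA, grigB, grigC, grigD]; exact dada_eq_adad σ)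

lemma tau_cancel : ∀ (i : Fin 8) (σ : List Bool),
    applyW (tauW (invIdx i)) (applyW (tauW i) σ) = σ := by
  intro i σ
  fin_cases i <;>
    simp only [tauW, invIdx, Matrix.cons_val_zero, Matrix.cons_val_one, Matrix.cons_val, Fin.reduceFinMk, Fin.isValue, applyW, actL] <;>
    first
      | simp
      | exact ad_pow4 σ

lemma ups_cancel' : ∀ (i : Fin 8) (σ : List Bool),
    applyW (upsW i) (applyW (upsW (invIdx i)) σ) = σ := by
  intro i σ
  fin_cases i <;>
    simp only [upsW, invIdx, Matrix.cons_val_zero, Matrix.cons_val_one, Matrix.cons_val, Fin.reduceFinMk, Fin.isValue, applyW, actL] <;>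
    first
      | simp
      | exact ad_pow4 σ

lemma applyW_congr {w w' : List Ltr} (h : evalG w = evalG w') (l : List Bool) :
    applyW w l = applyW w' l := by
  rw [← val_evalG, ← val_evalG, h]

/-- The main length bound. -/
lemma main_bound (h : Hsub) :
    wordLength Sgen (h : Grig) ≤
      4 * max (wordLength Sgen (psiH h).1) (wordLength Sgen (psiH h).2) + 12 := by
  set x := (psiH h).1 with hx
  set y := (psiH h).2 with hy
  -- minimal alternating words for the two sections
  obtain ⟨u₀, hu₀, hu₀len⟩ := exists_minword x
  obtain ⟨u, hu, hulen, hualt⟩ := alt_reduce u₀.length u₀ (le_refl _)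
  rw [hu₀] at hu
  obtain ⟨v₀, hv₀, hv₀len⟩ := exists_minword y
  obtain ⟨v, hv, hvlen, hvalt⟩ := alt_reduce v₀.length v₀ (le_refl _)
  rw [hv₀] at hv
  -- junk values
  set j := evalG (jkW u) with hj
  set j' := evalG (jkW v) with hj'
  -- the TT facts
  have t1 : TT x j := TT_evalG_congr hu rfl (TT_word0 u)
  have t2 : TT j' y := TT_evalG_congr rfl hv (TT_word1 v)
  have t3 : TT x y := psiH_TT h
  obtain ⟨i₁, rx1, rj⟩ := t1
  obtain ⟨i₂, rx2, ry⟩ := t3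
  obtain ⟨i₃, rj', ry3⟩ := t2
  have e12 : i₁ = i₂ := tau_funct (relB_trans (relB_symm rx1) rx2)
  have e32 : i₃ = i₂ := ups_funct (relB_trans (relB_symm ry3) ry)
  rw [e12] at rj
  rw [e32] at rj' 
  -- normal forms of the junk
  obtain ⟨k, ej⟩ := d4_nf (jkW u) (jkW_AD u)
  obtain ⟨k', ej'⟩ := d4_nf (jkW v) (jkW_AD v)
  have hkj : relB (evalG (tauW k)) (evalG (tauW (swapIdx i₂))) := by
    rw [← ej, (tau_swap i₂).1]
    exact rj
  have hk : k = swapIdx i₂ := tau_funct hkj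
  have hjv : j = evalG (upsW i₂) := by
    rw [hj, ej, hk, (tau_swap i₂).1]
  have hk'j : relB (evalG (tauW k')) (evalG (tauW i₂)) := by
    rw [← ej']
    exact rj'
  have hk' : k' = i₂ := tau_funct hk'j
  have hj'v : j' = evalG (tauW i₂) := by rw [hj', ej', hk']
  -- the word for h
  set W : List Ltr := sub0 u ++ (corrW (invIdx i₂) ++ sub1 v) with hW
  have hsec := (sec_spec h).1
  have hval : ∀ l : List Bool, ((h : Grig) : Equiv.Perm (List Bool)) l = applyW W l := by
    intro l
    rcases l with _ | ⟨b, σ⟩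
    · rw [hsec.1, hW, applyW_append, applyW_append, applyW_nil, applyW_nil, applyW_nil]
    · cases b
      · -- false
        rw [(hsec.2 σ).1]
        rw [hW, applyW_append, applyW_append]
        rw [(sub1_sections v σ).1]
        have e1 : applyW (jkW v) σ = applyW (tauW i₂) σ :=
          applyW_congr (by rw [← hj', hj'v]) σ
        rw [e1, (corr_sections (invIdx i₂) _).1, tau_cancel i₂ σ, (sub0_sections u σ).1]
        have e2 : applyW u σ = (x : Equiv.Perm (List Bool)) σ := by
          rw [← hu, val_evalG]
        rw [e2]
        rfl
      · -- true
        rw [(hsec.2 σ).2]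
        rw [hW, applyW_append, applyW_append]
        rw [(sub1_sections v σ).2]
        have e2 : applyW v σ = (y : Equiv.Perm (List Bool)) σ := by
          rw [← hv, val_evalG]
        rw [e2, (corr_sections (invIdx i₂) _).2, (sub0_sections u _).2]
        have e1 : applyW (jkW u) (applyW (upsW (invIdx i₂)) ((y : Equiv.Perm (List Bool)) σ)) =
            applyW (upsW i₂) (applyW (upsW (invIdx i₂)) ((y : Equiv.Perm (List Bool)) σ)) :=
          applyW_congr (by rw [← hj, hjv]) _
        rw [e1, ups_cancel']
        rfl
  have hWeq : evalG W = (h : Grig) :=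
    Subtype.ext (Equiv.ext fun l => by rw [val_evalG]; exact (hval l).symm)
  have hlen := wordLength_le hWeq
  have hWlen : W.length ≤ 2 * u.length + 1 + (8 + (2 * v.length + 1)) := by
    rw [hW]
    simp only [List.length_append]
    have := sub0_len hualt
    have := sub1_len hvalt
    have := corr_len (invIdx i₂)
    omega
  have hux : u.length ≤ wordLength Sgen x := by rw [← hu₀len]; exact hulen
  have hvy : v.length ≤ wordLength Sgen y := by rw [← hv₀len]; exact hvlen
  have hmax1 : wordLength Sgen x ≤ max (wordLength Sgen x) (wordLength Sgen y) := le_max_left _ _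
  have hmax2 : wordLength Sgen y ≤ max (wordLength Sgen x) (wordLength Sgen y) := le_max_right _ _
  omega

end Final
/-- Length contraction with constant `η = 4`: every element `h` of the first-level
stabilizer `H` of the Grigorchuk group satisfies `|h| ≤ 4·max{|h₀|, |h₁|} + 12`, where
`ψ(h) = (h₀, h₁)` and `|·|` is word length with respect to `{a, b, c, d}`. -/
theorem grigorchuk_length_contraction :
    ∃ H : Subgroup Grig,
      (∀ g : Grig, g ∈ H ↔ FixesFirst (g : Equiv.Perm (List Bool))) ∧
      ∃ ψ : H →* Grig × Grig, PsiProp H ψ ∧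
        ∀ h : H, wordLength ({ga, gb, gc, gd} : Set Grig) (h : Grig) ≤
          4 * max (wordLength ({ga, gb, gc, gd} : Set Grig) (ψ h).1)
                  (wordLength ({ga, gb, gc, gd} : Set Grig) (ψ h).2) + 12 := by
  refine ⟨Hsub, fun g => Iff.rfl, psiH, psiH_prop, fun h => ?_⟩
  exact main_bound h
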